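/- Let C, Y be finite nonempty sets, β* : C → Y a map, S ⊆ C nonempty, and β_lin : Δ_C → Δ_Y the marginalization inference layer β_lin(p)(y) = Σ_{c : β*(c)=y} p(c). Suppose α : S → Δ_C satisfies β_lin(α(g)) = δ_{β*(g)} for every g ∈ S. Then there exist finitely many maps a_1, …, a_r : S → C with β*(a_i(g)) = β*(g) for all g ∈ S and i, and weights λ_1, …, λ_r ≥ 0 with Σ_i λ_i = 1, such that α(g) = Σ_i λ_i δ_{a_i(g)} for every g ∈ S. That is, for probabilistic-logic inference layers, every (possibly non-deterministic) reasoning shortcut is a convex combination of deterministic reasoning shortcuts. -/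

import Mathlib

open scoped ENNReal

/-- **Every reasoning shortcut of a probabilistic-logic layer is a convex
combination of deterministic ones.** Let `C`, `Y` be finite nonempty sets,
`β* : C → Y`, `S ⊆ C` nonempty, and `β_lin` the marginalization inference
layer `β_lin p y = ∑_{c : β* c = y} p c`. If `α : S → Δ_C` satisfies
`β_lin (α g) = δ_{β* g}` for every `g ∈ S`, then there are finitely many maps
`a_1, …, a_r : S → C` with `β* (a_i g) = β* g` for all `g ∈ S`, and weights
`λ_i ≥ 0` summing to `1`, such that `α g = ∑_i λ_i δ_{a_i g}` for all
`g ∈ S`. -/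
theorem nondeterministic_RS_is_mixture_of_deterministic
    {C : Type*} [Fintype C] [Nonempty C] [DecidableEq C]
    {Y : Type*} [Fintype Y] [Nonempty Y] [DecidableEq Y]
    (βstar : C → Y) (S : Set C) (hS : S.Nonempty)
    (α : S → C → ℝ≥0∞)
    (hα1 : ∀ g : S, ∑ c, α g c = 1)
    (hopt : ∀ g : S, ∀ y : Y,
      (∑ c ∈ Finset.univ.filter fun c : C => βstar c = y, α g c)
        = if y = βstar (g : C) then 1 else 0) :
    ∃ (r : ℕ) (a : Fin r → S → C) (lam : Fin r → ℝ≥0∞),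
      (∀ i, ∀ g : S, βstar (a i g) = βstar (g : C)) ∧
      (∑ i, lam i = 1) ∧
      (∀ g : S, ∀ c : C, α g c = ∑ i, lam i * (if c = a i g then 1 else 0)) := by
  classical
  haveI : Fintype S := Fintype.ofFinite S
  -- support lemma: α g is supported on the fiber of βstar g
  have hsupp : ∀ g : S, ∀ c : C, βstar c ≠ βstar (g : C) → α g c = 0 := by
    intro g c hne
    have h0 := hopt g (βstar c)
    rw [if_neg hne] at h0
    have hmem : c ∈ Finset.univ.filter fun c' : C => βstar c' = βstar c := by simp
    have hle : α g c ≤ 0 := h0 ▸ Finset.single_le_sum (fun _ _ => zero_le) hmem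
    exact le_antisymm hle zero_le
  set e := (Fintype.equivFin (S → C)).symm with he
  refine ⟨Fintype.card (S → C),
    fun i g => if βstar (e i g) = βstar (g : C) then e i g else (g : C),
    fun i => ∏ g : S, α g (e i g), ?_, ?_, ?_⟩
  · intro i g
    dsimp only
    split_ifs with h
    · exact h
    · rfl
  · rw [Equiv.sum_comp e (fun f : S → C => ∏ g : S, α g (f g))]
    have key : ∑ f : S → C, ∏ g : S, α g (f g) = ∏ g : S, ∑ c : C, α g c := by
      rw [Finset.prod_univ_sum, Fintype.piFinset_univ]
    rw [key]
    simp [hα1]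
  · intro g c
    rw [Equiv.sum_comp e
      (fun f : S → C => (∏ g' : S, α g' (f g')) *
        (if c = (if βstar (f g) = βstar (g : C) then f g else (g : C)) then 1 else 0))]
    have step1 : ∀ f : S → C,
        (∏ g' : S, α g' (f g')) *
          (if c = (if βstar (f g) = βstar (g : C) then f g else (g : C)) then 1 else 0)
        = (∏ g' : S, α g' (f g')) * (if c = f g then 1 else 0) := by
      intro f
      by_cases hb : βstar (f g) = βstar (g : C)
      · rw [if_pos hb]
      · have h0 : α g (f g) = 0 := hsupp g (f g) hb
        have hP : ∏ g' : S, α g' (f g') = 0 :=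
          Finset.prod_eq_zero (Finset.mem_univ g) h0
        rw [hP, zero_mul, zero_mul]
    rw [Finset.sum_congr rfl (fun f _ => step1 f)]
    have step2 : ∀ f : S → C,
        (∏ g' : S, α g' (f g')) * (if c = f g then 1 else 0)
        = ∏ g' : S,
            ((if g' = g then (if c = f g' then 1 else 0) else 1) * α g' (f g')) := by
      intro f
      rw [Finset.prod_mul_distrib,
        Finset.prod_ite_eq' Finset.univ g (fun g' => if c = f g' then 1 else 0),
        if_pos (Finset.mem_univ g), mul_comm]
    rw [Finset.sum_congr rfl (fun f _ => step2 f)]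
    have key : ∑ f : S → C, ∏ g' : S,
        ((if g' = g then (if c = f g' then 1 else 0) else 1) * α g' (f g'))
        = ∏ g' : S, ∑ x : C,
            ((if g' = g then (if c = x then 1 else 0) else 1) * α g' x) := by
      rw [Finset.prod_univ_sum, Fintype.piFinset_univ]
    rw [key]
    rw [Finset.prod_eq_single g]
    · simp [ite_mul, Finset.sum_ite_eq]
    · intro g' _ hne
      simp only [if_neg hne, one_mul]
      exact hα1 g'
    · intro h
      exact absurd (Finset.mem_univ g) h
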